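/- Let X ∈ ℝ^{n×n} be Hurwitz and let Y, Z, ΔX, ΔY, ΔZ ∈ ℝ^{n×n} satisfy XᵀY + YX = −Z and (X+ΔX)ᵀ(Y+ΔY) + (Y+ΔY)(X+ΔX) = −(Z+ΔZ), with Z ≠ 0. Suppose γ > 0 satisfies ‖ΔX‖_F ≤ γ‖X‖_F, ‖ΔZ‖_F ≤ γ‖Z‖_F, and γ‖X‖_F · ‖𝒫(X)⁻¹‖₂ ≤ 1/4, where 𝒫(X) = Iₙ ⊗ Xᵀ + Xᵀ ⊗ Iₙ. Then ‖ΔY‖_F ≤ 8γ‖X‖_F · ‖𝒫(X)⁻¹‖₂ · ‖Y‖_F. -/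

import Mathlib

open Matrix MeasureTheory Filter NormedSpace
open scoped Kronecker

noncomputable section

/-- A real square matrix is Hurwitz if every eigenvalue over `ℂ` has negative real part. -/
def IsHurwitz {n : Type*} [Fintype n] [DecidableEq n] (X : Matrix n n ℝ) : Prop :=
  ∀ μ ∈ spectrum ℂ (X.map (algebraMap ℝ ℂ)), μ.re < 0

/-- The Frobenius norm of a real matrix. -/
def frobNorm {p q : Type*} [Fintype p] [Fintype q] (X : Matrix p q ℝ) : ℝ :=
  Real.sqrt (∑ i, ∑ j, (X i j) ^ 2)

/-- The spectral (ℓ²-operator) norm of a real matrix. -/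
def spec2Norm {p q : Type*} [Fintype p] [Fintype q] [DecidableEq q] (X : Matrix p q ℝ) : ℝ :=
  ‖LinearMap.toContinuousLinearMap (Matrix.toEuclideanLin X)‖

section LyapAux

open Polynomial

/-! ### Complex spectral facts -/

lemma lyap_mem_spectrum_iff_det {N : Type*} [Fintype N] [DecidableEq N]
    (M : Matrix N N ℂ) (μ : ℂ) :
    μ ∈ spectrum ℂ M ↔ (μ • (1 : Matrix N N ℂ) - M).det = 0 := by
  rw [spectrum.mem_iff, Algebra.algebraMap_eq_smul_one, Matrix.isUnit_iff_isUnit_det,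
    isUnit_iff_ne_zero, not_not]

lemma lyap_eval_charpoly {N : Type*} [Fintype N] [DecidableEq N] (M : Matrix N N ℂ) (μ : ℂ) :
    (Matrix.charpoly M).eval μ = (μ • (1 : Matrix N N ℂ) - M).det := by
  rw [Matrix.charpoly, ← Polynomial.coe_evalRingHom, RingHom.map_det]
  congr 1
  ext i j
  by_cases h : i = j <;>
    simp [h, Matrix.charmatrix_apply, Matrix.smul_apply, Matrix.one_apply,
      Matrix.diagonal_apply, Matrix.sub_apply]

lemma lyap_mem_spectrum_iff_root {N : Type*} [Fintype N] [DecidableEq N]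
    (M : Matrix N N ℂ) (μ : ℂ) :
    μ ∈ spectrum ℂ M ↔ (Matrix.charpoly M).eval μ = 0 := by
  rw [lyap_mem_spectrum_iff_det, lyap_eval_charpoly]

lemma lyap_spectrum_transpose {N : Type*} [Fintype N] [DecidableEq N] (M : Matrix N N ℂ) :
    spectrum ℂ Mᵀ = spectrum ℂ M := by
  ext μ
  rw [lyap_mem_spectrum_iff_det, lyap_mem_spectrum_iff_det]
  constructor <;> intro h
  · rw [← Matrix.det_transpose]
    simpa [Matrix.transpose_sub, Matrix.transpose_smul] using h
  · rw [show μ • (1 : Matrix N N ℂ) - Mᵀ = (μ • (1 : Matrix N N ℂ) - M)ᵀ by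
      simp [Matrix.transpose_sub, Matrix.transpose_smul], Matrix.det_transpose]
    exact h

/-- Injectivity of the Sylvester operator when both spectra lie in the open left half plane. -/
lemma lyap_sylvester_inj {N : ℕ} (hN : 0 < N) (A B : Matrix (Fin N) (Fin N) ℂ)
    (hA : ∀ μ ∈ spectrum ℂ A, μ.re < 0) (hB : ∀ μ ∈ spectrum ℂ B, μ.re < 0)
    (W : Matrix (Fin N) (Fin N) ℂ) (h : A * W + W * B = 0) : W = 0 := by
  have hAW : A * W = W * (-B) := by
    rw [Matrix.mul_neg, eq_neg_iff_add_eq_zero]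
    exact h
  have key : ∀ k : ℕ, A ^ k * W = W * (-B) ^ k := by
    intro k
    induction k with
    | zero => simp
    | succ k ih =>
        rw [pow_succ', pow_succ', mul_assoc, ih, ← mul_assoc, hAW, mul_assoc]
  have hcomm : ∀ p : ℂ[X], (Polynomial.aeval A p) * W = W * (Polynomial.aeval (-B) p) := by
    intro p
    induction p using Polynomial.induction_on' with
    | add p q hp hq => rw [map_add, map_add, add_mul, mul_add, hp, hq]
    | monomial k c =>
        rw [Polynomial.aeval_monomial, Polynomial.aeval_monomial, mul_assoc, key k,
          ← mul_assoc, Algebra.commutes, mul_assoc]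
  set p := (-B).charpoly with hp
  have h2 : (Polynomial.aeval A p) * W = 0 := by
    rw [hcomm, Matrix.aeval_self_charpoly, mul_zero]
  have hunit : IsUnit (Polynomial.aeval A p) := by
    by_contra hu
    have h0 : (0 : ℂ) ∈ spectrum ℂ (Polynomial.aeval A p) := spectrum.zero_mem (R := ℂ) hu
    have hdeg : 0 < p.degree := by
      rw [hp, Matrix.charpoly_degree_eq_dim, Fintype.card_fin]
      exact_mod_cast hN
    rw [spectrum.map_polynomial_aeval_of_degree_pos A p hdeg] at h0
    obtain ⟨μ, hμ, hev⟩ := h0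
    have hμB : μ ∈ spectrum ℂ (-B) := (lyap_mem_spectrum_iff_root _ _).mpr hev
    have hμB' : -μ ∈ spectrum ℂ B := by
      rw [← spectrum.neg_eq] at hμB
      simpa using hμB
    have := hA μ hμ
    have := hB (-μ) hμB'
    simp only [Complex.neg_re] at this
    linarith
  exact hunit.mul_left_cancel (by rw [h2, mul_zero])

lemma lyap_sylvester_inj_real {N : ℕ} (hN : 0 < N) (X : Matrix (Fin N) (Fin N) ℝ)
    (hX : IsHurwitz X) (W : Matrix (Fin N) (Fin N) ℝ) (h : Xᵀ * W + W * X = 0) : W = 0 := by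
  set f : ℝ →+* ℂ := algebraMap ℝ ℂ
  have hmap : (Xᵀ.map f) * (W.map f) + (W.map f) * (X.map f) = 0 := by
    have : f.mapMatrix (Xᵀ * W + W * X) = 0 := by rw [h, map_zero]
    rw [map_add, _root_.map_mul, _root_.map_mul] at this
    simpa [RingHom.mapMatrix_apply] using this
  have hT : Xᵀ.map f = (X.map f)ᵀ := (Matrix.transpose_map).symm ▸ rfl
  have hW0 : W.map f = 0 := by
    apply lyap_sylvester_inj hN ((X.map f)ᵀ) (X.map f) ?_ hX
    · rw [← hT]; exact hmap
    · rw [lyap_spectrum_transpose]; exact hX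
  ext i j
  have := congrFun (congrFun hW0 i) j
  simpa using this

/-! ### The Kronecker operator and its invertibility -/

lemma lyap_kron_mulVec {N : ℕ} (X W : Matrix (Fin N) (Fin N) ℝ) :
    ((1 : Matrix (Fin N) (Fin N) ℝ) ⊗ₖ Xᵀ + Xᵀ ⊗ₖ (1 : Matrix (Fin N) (Fin N) ℝ)) *ᵥ
      (fun p : Fin N × Fin N => W p.1 p.2)
    = fun p => (Xᵀ * W + W * X) p.1 p.2 := by
  funext p
  obtain ⟨i, j⟩ := p
  simp only [Matrix.mulVec, dotProduct, Matrix.add_apply, Matrix.kroneckerMap_apply,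
    Matrix.one_apply, Matrix.transpose_apply, Matrix.mul_apply, Fintype.sum_prod_type,
    add_mul, Finset.sum_add_distrib, ite_mul, one_mul, zero_mul, mul_ite, mul_one, mul_zero,
    Finset.sum_ite_irrel, Finset.sum_ite_eq, Finset.mem_univ, if_true, Finset.sum_const_zero]
  rw [add_comm]
  congr 1
  exact Finset.sum_congr rfl fun k _ => mul_comm (X k j) (W i k)

lemma lyap_P_invertible {N : ℕ} (hN : 0 < N) (X : Matrix (Fin N) (Fin N) ℝ) (hX : IsHurwitz X) :
    ((1 : Matrix (Fin N) (Fin N) ℝ) ⊗ₖ Xᵀ + Xᵀ ⊗ₖ (1 : Matrix (Fin N) (Fin N) ℝ))⁻¹ *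
      ((1 : Matrix (Fin N) (Fin N) ℝ) ⊗ₖ Xᵀ + Xᵀ ⊗ₖ (1 : Matrix (Fin N) (Fin N) ℝ)) = 1 := by
  set P := (1 : Matrix (Fin N) (Fin N) ℝ) ⊗ₖ Xᵀ + Xᵀ ⊗ₖ (1 : Matrix (Fin N) (Fin N) ℝ)
  apply Matrix.nonsing_inv_mul
  rw [isUnit_iff_ne_zero]
  intro hdet
  obtain ⟨v, hv, hv0⟩ := (Matrix.exists_mulVec_eq_zero_iff).mpr hdet
  set W : Matrix (Fin N) (Fin N) ℝ := Matrix.of fun i j => v (i, j)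
  have hvec : (fun p : Fin N × Fin N => W p.1 p.2) = v := by funext p; rfl
  have h0 : Xᵀ * W + W * X = 0 := by
    have := lyap_kron_mulVec X W
    rw [hvec, hv0] at this
    ext i j
    have := congrFun this.symm (i, j)
    simpa using this
  have := lyap_sylvester_inj_real hN X hX W h0
  apply hv
  funext p
  have := congrFun (congrFun this p.1) p.2
  simpa [W] using this

/-! ### Frobenius-norm lemmas -/

attribute [local instance] Matrix.frobeniusSeminormedAddCommGroup

lemma lyap_frobNorm_eq_norm {m k : Type*} [Fintype m] [Fintype k] (A : Matrix m k ℝ) :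
    frobNorm A = ‖A‖ := by
  rw [Matrix.frobenius_norm_def, frobNorm, Real.sqrt_eq_rpow]
  congr 1
  refine Finset.sum_congr rfl fun i _ => Finset.sum_congr rfl fun j _ => ?_
  rw [Real.rpow_two, Real.norm_eq_abs, sq_abs]

lemma lyap_frobNorm_nonneg {m k : Type*} [Fintype m] [Fintype k] (A : Matrix m k ℝ) :
    0 ≤ frobNorm A := Real.sqrt_nonneg _

lemma lyap_frobNorm_eq_euclid {m k : Type*} [Fintype m] [Fintype k] (A : Matrix m k ℝ) :
    frobNorm A = ‖(WithLp.equiv 2 ((m × k) → ℝ)).symm (fun p => A p.1 p.2)‖ := by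
  rw [EuclideanSpace.norm_eq, frobNorm]
  congr 1
  simp only [WithLp.equiv_symm_apply, PiLp.toLp_apply, Real.norm_eq_abs, sq_abs]
  rw [Fintype.sum_prod_type]

lemma lyap_mulVec_euclid_bound {m k : Type*} [Fintype m] [Fintype k] [DecidableEq k]
    (M : Matrix m k ℝ) (v : k → ℝ) :
    ‖(WithLp.equiv 2 (m → ℝ)).symm (M *ᵥ v)‖
      ≤ spec2Norm M * ‖(WithLp.equiv 2 (k → ℝ)).symm v‖ := by
  have h := (LinearMap.toContinuousLinearMap (Matrix.toEuclideanLin M)).le_opNorm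
    ((WithLp.equiv 2 (k → ℝ)).symm v)
  rw [spec2Norm]
  simpa [WithLp.equiv_symm_apply, Matrix.toEuclideanLin_apply_piLp_toLp] using h

/-- The key a priori bound: `‖W‖_F ≤ ‖P⁻¹‖₂ ‖XᵀW + WX‖_F`. -/
lemma lyap_frob_P_bound {N : ℕ} (hN : 0 < N) (X : Matrix (Fin N) (Fin N) ℝ) (hX : IsHurwitz X)
    (W : Matrix (Fin N) (Fin N) ℝ) :
    frobNorm W
      ≤ spec2Norm ((1 : Matrix (Fin N) (Fin N) ℝ) ⊗ₖ Xᵀ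
          + Xᵀ ⊗ₖ (1 : Matrix (Fin N) (Fin N) ℝ))⁻¹ * frobNorm (Xᵀ * W + W * X) := by
  set P := (1 : Matrix (Fin N) (Fin N) ℝ) ⊗ₖ Xᵀ + Xᵀ ⊗ₖ (1 : Matrix (Fin N) (Fin N) ℝ) with hP
  set v : (Fin N × Fin N) → ℝ := fun p => W p.1 p.2 with hv
  have hPv : P *ᵥ v = fun p => (Xᵀ * W + W * X) p.1 p.2 := lyap_kron_mulVec X W
  have hinv : P⁻¹ *ᵥ (P *ᵥ v) = v := by
    rw [Matrix.mulVec_mulVec, lyap_P_invertible hN X hX, Matrix.one_mulVec]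
  calc frobNorm W = ‖(WithLp.equiv 2 ((Fin N × Fin N) → ℝ)).symm v‖ :=
        lyap_frobNorm_eq_euclid W
    _ = ‖(WithLp.equiv 2 ((Fin N × Fin N) → ℝ)).symm (P⁻¹ *ᵥ (P *ᵥ v))‖ := by rw [hinv]
    _ ≤ spec2Norm P⁻¹ * ‖(WithLp.equiv 2 ((Fin N × Fin N) → ℝ)).symm (P *ᵥ v)‖ :=
        lyap_mulVec_euclid_bound _ _
    _ = spec2Norm P⁻¹ * frobNorm (Xᵀ * W + W * X) := by
        rw [hPv, lyap_frobNorm_eq_euclid (Xᵀ * W + W * X)]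

lemma lyap_frob_residual_bound {N : ℕ} (ΔZ ΔX Y ΔY : Matrix (Fin N) (Fin N) ℝ) :
    frobNorm (-ΔZ - (ΔXᵀ * (Y + ΔY) + (Y + ΔY) * ΔX))
      ≤ frobNorm ΔZ + 2 * frobNorm ΔX * (frobNorm Y + frobNorm ΔY) := by
  simp only [lyap_frobNorm_eq_norm]
  calc ‖-ΔZ - (ΔXᵀ * (Y + ΔY) + (Y + ΔY) * ΔX)‖
      ≤ ‖-ΔZ‖ + ‖ΔXᵀ * (Y + ΔY) + (Y + ΔY) * ΔX‖ := norm_sub_le _ _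
    _ ≤ ‖ΔZ‖ + (‖ΔXᵀ * (Y + ΔY)‖ + ‖(Y + ΔY) * ΔX‖) := by
        rw [norm_neg]
        gcongr
        exact norm_add_le _ _
    _ ≤ ‖ΔZ‖ + (‖ΔXᵀ‖ * ‖Y + ΔY‖ + ‖Y + ΔY‖ * ‖ΔX‖) := by
        gcongr
        · exact Matrix.frobenius_norm_mul _ _
        · exact Matrix.frobenius_norm_mul _ _
    _ ≤ ‖ΔZ‖ + (‖ΔX‖ * (‖Y‖ + ‖ΔY‖) + (‖Y‖ + ‖ΔY‖) * ‖ΔX‖) := by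
        rw [Matrix.frobenius_norm_transpose]
        gcongr <;> exact norm_add_le _ _
    _ = ‖ΔZ‖ + 2 * ‖ΔX‖ * (‖Y‖ + ‖ΔY‖) := by ring

lemma lyap_frob_Z_bound {N : ℕ} (X Y Z : Matrix (Fin N) (Fin N) ℝ)
    (hYZ : Xᵀ * Y + Y * X = -Z) :
    frobNorm Z ≤ 2 * frobNorm X * frobNorm Y := by
  have hZ : Z = -(Xᵀ * Y + Y * X) := by rw [hYZ, neg_neg]
  rw [hZ]
  simp only [lyap_frobNorm_eq_norm]
  calc ‖-(Xᵀ * Y + Y * X)‖ = ‖Xᵀ * Y + Y * X‖ := norm_neg _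
    _ ≤ ‖Xᵀ * Y‖ + ‖Y * X‖ := norm_add_le _ _
    _ ≤ ‖Xᵀ‖ * ‖Y‖ + ‖Y‖ * ‖X‖ := by
        gcongr
        · exact Matrix.frobenius_norm_mul _ _
        · exact Matrix.frobenius_norm_mul _ _
    _ = 2 * ‖X‖ * ‖Y‖ := by rw [Matrix.frobenius_norm_transpose]; ring

end LyapAux

attribute [local instance] Matrix.normedAddCommGroup Matrix.normedSpace

/-- relative perturbation bound for Lyapunov equations, in the Frobenius norm. -/
theorem lyapunov_perturbation_frobenius_bound
    (n : ℕ) (hn : 0 < n) (X Y Z ΔX ΔY ΔZ : Matrix (Fin n) (Fin n) ℝ)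
    (hX : IsHurwitz X)
    (hYZ : Xᵀ * Y + Y * X = -Z)
    (hpert : (X + ΔX)ᵀ * (Y + ΔY) + (Y + ΔY) * (X + ΔX) = -(Z + ΔZ))
    (hZ : Z ≠ 0) (γ : ℝ) (hγ : 0 < γ)
    (hX' : frobNorm ΔX ≤ γ * frobNorm X)
    (hZ' : frobNorm ΔZ ≤ γ * frobNorm Z)
    (hsmall : γ * frobNorm X
        * spec2Norm ((1 : Matrix (Fin n) (Fin n) ℝ) ⊗ₖ Xᵀ
            + Xᵀ ⊗ₖ (1 : Matrix (Fin n) (Fin n) ℝ))⁻¹ ≤ 1 / 4) :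
    frobNorm ΔY
      ≤ 8 * γ * frobNorm X
          * spec2Norm ((1 : Matrix (Fin n) (Fin n) ℝ) ⊗ₖ Xᵀ
              + Xᵀ ⊗ₖ (1 : Matrix (Fin n) (Fin n) ℝ))⁻¹
          * frobNorm Y := by
  set c := spec2Norm ((1 : Matrix (Fin n) (Fin n) ℝ) ⊗ₖ Xᵀ
      + Xᵀ ⊗ₖ (1 : Matrix (Fin n) (Fin n) ℝ))⁻¹ with hc
  -- residual equation
  have hTr : (X + ΔX)ᵀ = Xᵀ + ΔXᵀ := Matrix.transpose_add _ _
  have h1 : (Xᵀ + ΔXᵀ) * (Y + ΔY) + (Y + ΔY) * (X + ΔX) = -(Z + ΔZ) := by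
    rw [← hTr]; exact hpert
  have h2 : Xᵀ * Y + Xᵀ * ΔY + ΔXᵀ * (Y + ΔY) + (Y * X + ΔY * X + (Y + ΔY) * ΔX)
      = -(Z + ΔZ) := by
    rw [← h1]; noncomm_ring
  have h3 : Xᵀ * ΔY + ΔY * X + (ΔXᵀ * (Y + ΔY) + (Y + ΔY) * ΔX) = -ΔZ := by
    calc Xᵀ * ΔY + ΔY * X + (ΔXᵀ * (Y + ΔY) + (Y + ΔY) * ΔX)
        = (Xᵀ * Y + Xᵀ * ΔY + ΔXᵀ * (Y + ΔY) + (Y * X + ΔY * X + (Y + ΔY) * ΔX))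
            - (Xᵀ * Y + Y * X) := by abel
      _ = -(Z + ΔZ) - (-Z) := by rw [h2, hYZ]
      _ = -ΔZ := by abel
  have hres : Xᵀ * ΔY + ΔY * X = -ΔZ - (ΔXᵀ * (Y + ΔY) + (Y + ΔY) * ΔX) := by
    rw [← h3]; abel
  -- the a priori bound
  have hbound := lyap_frob_P_bound hn X hX ΔY
  rw [hres, ← hc] at hbound
  have hR := lyap_frob_residual_bound ΔZ ΔX Y ΔY
  have hZb := lyap_frob_Z_bound X Y Z hYZ
  -- notation
  set d := frobNorm ΔY with hd
  set y := frobNorm Y with hy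
  set a := frobNorm X with ha
  set z := frobNorm Z with hz
  have hc0 : 0 ≤ c := by rw [hc, spec2Norm]; exact norm_nonneg _
  have hd0 : 0 ≤ d := lyap_frobNorm_nonneg _
  have hy0 : 0 ≤ y := lyap_frobNorm_nonneg _
  have ha0 : 0 ≤ a := lyap_frobNorm_nonneg _
  have hz0 : 0 ≤ z := lyap_frobNorm_nonneg _
  have hΔX0 : 0 ≤ frobNorm ΔX := lyap_frobNorm_nonneg _
  -- chain of inequalities
  have step1 : frobNorm ΔZ + 2 * frobNorm ΔX * (y + d) ≤ γ * z + 2 * (γ * a) * (y + d) := by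
    have h2' : 2 * frobNorm ΔX * (y + d) ≤ 2 * (γ * a) * (y + d) := by
      have : (0:ℝ) ≤ y + d := by linarith
      nlinarith
    linarith
  have step2 : d ≤ c * (γ * z + 2 * (γ * a) * (y + d)) := by
    calc d ≤ c * frobNorm (-ΔZ - (ΔXᵀ * (Y + ΔY) + (Y + ΔY) * ΔX)) := hbound
      _ ≤ c * (frobNorm ΔZ + 2 * frobNorm ΔX * (y + d)) := by
          exact mul_le_mul_of_nonneg_left hR hc0
      _ ≤ c * (γ * z + 2 * (γ * a) * (y + d)) := mul_le_mul_of_nonneg_left step1 hc0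
  have step3 : d ≤ 4 * (γ * a * c) * y + 2 * (γ * a * c) * d := by
    have hzz : γ * z ≤ 2 * (γ * a) * y := by nlinarith
    have : c * (γ * z + 2 * (γ * a) * (y + d))
        ≤ c * (2 * (γ * a) * y + 2 * (γ * a) * (y + d)) := by
      apply mul_le_mul_of_nonneg_left _ hc0
      linarith
    calc d ≤ c * (γ * z + 2 * (γ * a) * (y + d)) := step2
      _ ≤ c * (2 * (γ * a) * y + 2 * (γ * a) * (y + d)) := this
      _ = 4 * (γ * a * c) * y + 2 * (γ * a * c) * d := by ring
  have hk : γ * a * c ≤ 1 / 4 := hsmall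
  have hfin : d ≤ 8 * (γ * a * c) * y := by
    nlinarith [mul_nonneg hd0 (by linarith : (0:ℝ) ≤ 1 / 4 - γ * a * c)]
  calc d ≤ 8 * (γ * a * c) * y := hfin
    _ = 8 * γ * a * c * y := by ring
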